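/- Let H be a real square matrix block-triangular in ordered blocks (a, b) with H_{ba} = 0 and H_{aa}, H_{bb} invertible, and let W be symmetric positive definite with W_{bb} invertible. Set K = inv_a H and Q = inv_b W. Then the partial inversion of Hᵀ W⁻¹ H on a equals the block matrix with (a,a)-block K_{aa} Q_{aa} K_{aa}ᵀ, (a,b)-block K_{ab} + K_{aa} Q_{ab} K_{bb}, and (b,b)-block H_{bb}ᵀ Q_{bb} H_{bb}. -/

import Mathlib

open Matrix

/-- Partial inversion on the first block of a 2×2 block matrix. -/
noncomputable def pinvBlocks {α β : Type*} [Fintype α] [Fintype β] [DecidableEq α] [DecidableEq β]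
    (M : Matrix (α ⊕ β) (α ⊕ β) ℝ) : Matrix (α ⊕ β) (α ⊕ β) ℝ :=
  Matrix.fromBlocks (M.toBlocks₁₁)⁻¹ (-((M.toBlocks₁₁)⁻¹ * M.toBlocks₁₂))
    (M.toBlocks₂₁ * (M.toBlocks₁₁)⁻¹)
    (M.toBlocks₂₂ - M.toBlocks₂₁ * (M.toBlocks₁₁)⁻¹ * M.toBlocks₁₂)

/-- for `H` block-triangular in `(a,b)` and `W` symmetric positive definite,
with `K = inv_a H` and `Q = inv_b W`, partial inversion of `Hᵀ W⁻¹ H` on `a` has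
(a,a)-block `K_aa Q_aa K_aaᵀ`, (a,b)-block `K_ab + K_aa Q_ab K_bb` and
(b,b)-block `H_bbᵀ Q_bb H_bb`. -/
theorem partial_inversion_block_triangular_product
    {α β : Type*} [Fintype α] [Fintype β] [DecidableEq α] [DecidableEq β]
    (Haa : Matrix α α ℝ) (Hab : Matrix α β ℝ) (Hbb : Matrix β β ℝ)
    (Waa : Matrix α α ℝ) (Wab : Matrix α β ℝ) (Wbb : Matrix β β ℝ)
    [Invertible Haa] [Invertible Hbb]
    (hW : (Matrix.fromBlocks Waa Wab Wabᵀ Wbb).PosDef) :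
    letI H : Matrix (α ⊕ β) (α ⊕ β) ℝ := Matrix.fromBlocks Haa Hab 0 Hbb
    letI W : Matrix (α ⊕ β) (α ⊕ β) ℝ := Matrix.fromBlocks Waa Wab Wabᵀ Wbb
    letI Kaa := Haa⁻¹
    letI Kab := -(Haa⁻¹ * Hab)
    letI Kbb := Hbb
    letI Qaa := Waa - Wab * Wbb⁻¹ * Wabᵀ
    letI Qab := Wab * Wbb⁻¹
    letI Qbb := Wbb⁻¹
    (pinvBlocks (Hᵀ * W⁻¹ * H)).toBlocks₁₁ = Kaa * Qaa * Kaaᵀ ∧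
    (pinvBlocks (Hᵀ * W⁻¹ * H)).toBlocks₁₂ = Kab + Kaa * Qab * Kbb ∧
    (pinvBlocks (Hᵀ * W⁻¹ * H)).toBlocks₂₂ = Hbbᵀ * Qbb * Hbb := by
  have hWbb : Wbb.PosDef := by
    rw [Matrix.posDef_iff_dotProduct_mulVec]
    constructor
    · have h1 := congrArg Matrix.toBlocks₂₂ hW.1
      simpa [Matrix.IsHermitian, Matrix.fromBlocks_conjTranspose, Matrix.fromBlocks_transpose] using h1
    · intro x hx
      have hx' : (Sum.elim (0 : α → ℝ) x) ≠ 0 := by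
        intro h
        apply hx
        funext i
        exact congrFun h (Sum.inr i)
      have h2 := hW.dotProduct_mulVec_pos hx'
      simpa [Matrix.fromBlocks_mulVec, Matrix.dotProduct_block] using h2
  haveI iWbb : Invertible Wbb := hWbb.isUnit.invertible
  haveI iW : Invertible (Matrix.fromBlocks Waa Wab Wabᵀ Wbb) := hW.isUnit.invertible
  haveI iS' : Invertible (Waa - Wab * ⅟Wbb * Wabᵀ) :=
    Matrix.invertibleOfFromBlocks₂₂Invertible Waa Wab Wabᵀ Wbb
  haveI iS : Invertible (Waa - Wab * Wbb⁻¹ * Wabᵀ) := by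
    rwa [← invOf_eq_nonsing_inv]
  set S := Waa - Wab * Wbb⁻¹ * Wabᵀ with hSdef
  have hWinv : (Matrix.fromBlocks Waa Wab Wabᵀ Wbb)⁻¹ =
      Matrix.fromBlocks S⁻¹ (-(S⁻¹ * Wab * Wbb⁻¹)) (-(Wbb⁻¹ * Wabᵀ * S⁻¹))
        (Wbb⁻¹ + Wbb⁻¹ * Wabᵀ * S⁻¹ * Wab * Wbb⁻¹) := by
    rw [← invOf_eq_nonsing_inv, Matrix.invOf_fromBlocks₂₂_eq]
    simp only [invOf_eq_nonsing_inv, hSdef]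
  have hM : (Matrix.fromBlocks Haa Hab 0 Hbb)ᵀ * (Matrix.fromBlocks Waa Wab Wabᵀ Wbb)⁻¹ *
      (Matrix.fromBlocks Haa Hab 0 Hbb) =
      Matrix.fromBlocks (Haaᵀ * S⁻¹ * Haa)
        (Haaᵀ * S⁻¹ * (Hab - Wab * Wbb⁻¹ * Hbb))
        ((Habᵀ - Hbbᵀ * Wbb⁻¹ * Wabᵀ) * S⁻¹ * Haa)
        ((Habᵀ - Hbbᵀ * Wbb⁻¹ * Wabᵀ) * S⁻¹ * (Hab - Wab * Wbb⁻¹ * Hbb)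
          + Hbbᵀ * Wbb⁻¹ * Hbb) := by
    rw [hWinv, Matrix.fromBlocks_transpose, Matrix.transpose_zero,
      Matrix.fromBlocks_multiply, Matrix.fromBlocks_multiply]
    rw [Matrix.fromBlocks_inj]
    refine ⟨?_, ?_, ?_, ?_⟩ <;>
    · simp only [Matrix.mul_add, Matrix.add_mul, Matrix.mul_sub, Matrix.sub_mul,
        Matrix.mul_neg, Matrix.neg_mul, Matrix.zero_mul, Matrix.mul_zero,
        Matrix.mul_assoc, add_zero, zero_add, neg_neg]
      abel
  haveI : Invertible Haaᵀ := Matrix.invertibleTranspose Haa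
  haveI : Invertible (Haaᵀ * S⁻¹ * Haa) := by
    haveI : Invertible S⁻¹ := (Matrix.isUnit_nonsing_inv_iff.2 (isUnit_of_invertible S)).invertible
    exact Invertible.mul (Invertible.mul ‹_› ‹_›) ‹_›
  have h11inv : (Haaᵀ * S⁻¹ * Haa)⁻¹ = Haa⁻¹ * S * (Haaᵀ)⁻¹ := by
    rw [Matrix.mul_inv_rev, Matrix.mul_inv_rev, Matrix.inv_inv_of_invertible, Matrix.mul_assoc]
  rw [hM]
  unfold pinvBlocks
  simp only [Matrix.toBlocks_fromBlocks₁₁, Matrix.toBlocks_fromBlocks₁₂,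
    Matrix.toBlocks_fromBlocks₂₁, Matrix.toBlocks_fromBlocks₂₂, h11inv]
  refine ⟨?_, ?_, ?_⟩
  · show Haa⁻¹ * S * Haaᵀ⁻¹ = Haa⁻¹ * S * (Haa⁻¹)ᵀ
    rw [Matrix.transpose_nonsing_inv]
  · show -(Haa⁻¹ * S * Haaᵀ⁻¹ * (Haaᵀ * S⁻¹ * (Hab - Wab * Wbb⁻¹ * Hbb))) =
      -(Haa⁻¹ * Hab) + Haa⁻¹ * (Wab * Wbb⁻¹) * Hbb
    simp only [Matrix.mul_assoc, Matrix.inv_mul_cancel_left_of_invertible,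
      Matrix.mul_inv_cancel_left_of_invertible]
    simp only [Matrix.mul_sub, Matrix.sub_mul, Matrix.mul_assoc, neg_sub]
    abel
  · simp only [Matrix.mul_assoc, Matrix.inv_mul_cancel_left_of_invertible,
      Matrix.mul_inv_cancel_left_of_invertible]
    simp only [Matrix.mul_sub, Matrix.sub_mul, Matrix.mul_add, Matrix.add_mul, Matrix.mul_assoc]
    abel
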